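/- There exists a constant K > 0 (depending only on p) such that for every integer q ≥ 1 there exist real numbers a_{q,0}, …, a_{q,q} with Σ_{k=0}^{q} |a_{q,k}| ≤ K^q · q! and such that the q-th derivative of E satisfies E^{(q)}(z) = Σ_{k=0}^{q} a_{q,k} · z^k · E(z)^{q+1+k} for all z ∈ Ω_p. -/

import Mathlib

noncomputable def Rp (p : ℕ) : ℝ :=
  ((p - 1 : ℕ) : ℝ) ^ (p - 1) / (p : ℝ) ^ p

noncomputable def cutPlane (p : ℕ) : Set ℂ :=
  (Complex.ofReal '' Set.Ici (Rp p))ᶜ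

lemma isOpen_cutPlane (p : ℕ) : IsOpen (cutPlane p) :=
  isOpen_compl_iff.mpr
    (Complex.isUniformEmbedding_ofReal.isClosedEmbedding.isClosedMap _ isClosed_Ici)

lemma hasDerivAt_E (m : ℕ) (T E : ℂ → ℂ)
    (hT : AnalyticOnNhd ℂ T (cutPlane (m+2)))
    (heq : ∀ z ∈ cutPlane (m+2), z * T z ^ (m+2) - T z + 1 = 0)
    (hne : ∀ z ∈ cutPlane (m+2), 1 - ((m+2 : ℕ) : ℂ) * z * T z ^ (m+2 - 1) ≠ 0)
    (hE : ∀ z : ℂ, E z = T z ^ (m+2-1) * (1 - ((m+2:ℕ) : ℂ) * z * T z ^ (m+2-1))⁻¹)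
    (z : ℂ) (hz : z ∈ cutPlane (m+2)) :
    HasDerivAt E ((2*((m+2:ℕ):ℂ)-1) * E z ^ 2 + ((m+2:ℕ):ℂ)*(((m+2:ℕ):ℂ)-1) * z * E z ^ 3) z := by
  simp only [show m+2-1 = m+1 from rfl] at hne hE
  have hzopen : cutPlane (m+2) ∈ nhds z := (isOpen_cutPlane (m+2)).mem_nhds hz
  have hTd : HasDerivAt T (deriv T z) z := ((hT z hz).differentiableAt).hasDerivAt
  set t := T z with htdef
  set t' := deriv T z with ht'def
  set w : ℂ := 1 - ((m+2:ℕ):ℂ) * z * t ^ (m+1) with hwdef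
  have hwne : w ≠ 0 := hne z hz
  have hg : HasDerivAt (fun y => y * T y ^ (m+2) - T y + 1)
      ((1 * t ^ (m+2) + z * (((m+2:ℕ):ℂ) * t ^ (m+2-1) * t')) - t') z := by
    simpa using (((hasDerivAt_id z).mul (hTd.pow (m+2))).sub hTd).add_const 1
  have hg0 : (fun y => y * T y ^ (m+2) - T y + 1) =ᶠ[nhds z] (fun _ => (0:ℂ)) :=
    Filter.eventuallyEq_of_mem hzopen (fun y hy => heq y hy)
  have hkey : (1 * t ^ (m+2) + z * (((m+2:ℕ):ℂ) * t ^ (m+2-1) * t')) - t' = 0 :=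
    (hg.congr_of_eventuallyEq hg0.symm).unique (hasDerivAt_const z 0)
  have ht' : t' = t ^ (m+2) / w := by
    rw [eq_div_iff hwne, hwdef]
    push_cast at hkey ⊢
    linear_combination -hkey
  have hu : HasDerivAt (fun y => T y ^ (m+1)) (((m+1:ℕ):ℂ) * t^(m+1-1) * t') z := hTd.pow _
  have hmul : HasDerivAt (fun y => ((m+2:ℕ):ℂ) * y * T y ^ (m+1))
      (((m+2:ℕ):ℂ) * 1 * t^(m+1) + ((m+2:ℕ):ℂ) * z * (((m+1:ℕ):ℂ) * t^(m+1-1) * t')) z :=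
    (((hasDerivAt_id z).const_mul (((m+2:ℕ):ℂ))).mul hu)
  have hw1 : HasDerivAt (fun y => 1 - ((m+2:ℕ):ℂ) * y * T y ^ (m+1))
      (0 - (((m+2:ℕ):ℂ) * 1 * t^(m+1) + ((m+2:ℕ):ℂ) * z * (((m+1:ℕ):ℂ) * t^(m+1-1) * t'))) z :=
    (hasDerivAt_const z (1:ℂ)).sub hmul
  have hinv := hw1.fun_inv hwne
  have hEd := hu.fun_mul hinv
  have hfun : E = fun y => T y ^ (m+1) * (1 - ((m+2:ℕ):ℂ) * y * T y ^ (m+1))⁻¹ := funext hE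
  rw [hfun]
  refine hEd.congr_deriv ?_
  rw [ht']
  simp only [← htdef, ← hwdef]
  push_cast
  field_simp
  ring

set_option maxHeartbeats 1000000 in
theorem fussCatalan_E_iteratedDeriv_structure (p : ℕ) (hp : 2 ≤ p) (T E : ℂ → ℂ)
    (hT : AnalyticOnNhd ℂ T (cutPlane p))
    (heq : ∀ z ∈ cutPlane p, z * T z ^ p - T z + 1 = 0)
    (hne : ∀ z ∈ cutPlane p, 1 - (p : ℂ) * z * T z ^ (p - 1) ≠ 0)
    (hE : ∀ z : ℂ, E z = T z ^ (p - 1) * (1 - (p : ℂ) * z * T z ^ (p - 1))⁻¹) :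
    ∃ K : ℝ, 0 < K ∧ ∀ q : ℕ, 1 ≤ q →
      ∃ a : ℕ → ℝ,
        (∑ k ∈ Finset.range (q + 1), |a k|) ≤ K ^ q * (Nat.factorial q : ℝ) ∧
        ∀ z ∈ cutPlane p,
          iteratedDeriv q E z
            = ∑ k ∈ Finset.range (q + 1), (a k : ℂ) * z ^ k * E z ^ (q + 1 + k) := by
  obtain ⟨m, rfl⟩ : ∃ m, p = m + 2 := ⟨p - 2, by omega⟩
  have hD : ∀ z ∈ cutPlane (m+2), HasDerivAt E
      ((2*((m+2:ℕ):ℂ)-1) * E z ^ 2 + ((m+2:ℕ):ℂ)*(((m+2:ℕ):ℂ)-1) * z * E z ^ 3) z :=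
    fun z hz => hasDerivAt_E m T E hT heq hne hE z hz
  have hA2 : (2:ℝ) ≤ ((m+2:ℕ):ℝ) := by push_cast; linarith
  have hPpos : (0:ℝ) < 6 * ((m+2:ℕ):ℝ) ^ 2 := by positivity
  refine ⟨6 * ((m+2:ℕ):ℝ) ^ 2, hPpos, ?_⟩
  have main : ∀ q : ℕ, 1 ≤ q → ∃ a : ℕ → ℝ,
      (∀ k, q < k → a k = 0) ∧
      ((∑ k ∈ Finset.range (q + 1), |a k|)
          ≤ (6 * ((m+2:ℕ):ℝ) ^ 2) ^ q * (Nat.factorial q : ℝ)) ∧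
      ∀ z ∈ cutPlane (m+2), iteratedDeriv q E z
        = ∑ k ∈ Finset.range (q + 1), (a k : ℂ) * z ^ k * E z ^ (q + 1 + k) := by
    intro q hq
    induction q, hq using Nat.le_induction with
    | base =>
      refine ⟨fun k => if k = 0 then 2*((m+2:ℕ):ℝ)-1
        else if k = 1 then ((m+2:ℕ):ℝ)*(((m+2:ℕ):ℝ)-1) else 0, ?_, ?_, ?_⟩
      · intro k hk
        simp [show k ≠ 0 by omega, show k ≠ 1 by omega]
      · simp only [Finset.sum_range_succ, Finset.sum_range_zero]
        norm_num
        rw [abs_of_nonneg (by nlinarith), abs_of_nonneg (by nlinarith)]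
        nlinarith [abs_of_nonneg (show (0:ℝ) ≤ (m:ℝ)+2-1 by have := (Nat.cast_nonneg m : (0:ℝ) ≤ m); linarith)]
      · intro z hz
        rw [iteratedDeriv_one, (hD z hz).deriv]
        simp only [Finset.sum_range_succ, Finset.sum_range_zero]
        norm_num
    | succ q hq ih =>
      obtain ⟨a, hva, hsum, hid⟩ := ih
      set b : ℕ → ℝ := fun j => ((j+1:ℕ):ℝ) * a (j+1)
          + (2*((m+2:ℕ):ℝ)-1) * ((q+1+j:ℕ):ℝ) * a j
          + (if j = 0 then 0 else ((m+2:ℕ):ℝ)*(((m+2:ℕ):ℝ)-1) * ((q+j:ℕ):ℝ) * a (j-1))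
        with hbdef
      have hvb : ∀ k, q + 1 < k → b k = 0 := by
        intro k hk
        simp only [hbdef]
        rw [hva (k+1) (by omega), hva k (by omega), if_neg (by omega), hva (k-1) (by omega)]
        ring
      refine ⟨b, hvb, ?_, ?_⟩
      · -- sum bound
        show (∑ j ∈ Finset.range (q+2), |b j|)
            ≤ (6 * ((m+2:ℕ):ℝ) ^ 2) ^ (q+1) * (Nat.factorial (q+1) : ℝ)
        have hS0 : (0:ℝ) ≤ ∑ k ∈ Finset.range (q+1), |a k| :=
          Finset.sum_nonneg fun k _ => abs_nonneg _
        have habs : ∀ j ∈ Finset.range (q+2), |b j| ≤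
            2*((m+2:ℕ):ℝ)^2*((q:ℝ)+1) * |a (j+1)|
            + 2*((m+2:ℕ):ℝ)^2*((q:ℝ)+1) * |a j|
            + (if j = 0 then 0 else 2*((m+2:ℕ):ℝ)^2*((q:ℝ)+1) * |a (j-1)|) := by
          intro j hj
          simp only [Finset.mem_range] at hj
          have hjq : (j:ℝ) ≤ (q:ℝ)+1 := by exact_mod_cast (by omega : j ≤ q+1)
          have hq1 : (0:ℝ) ≤ (q:ℝ)+1 := by positivity
          simp only [hbdef]
          refine (abs_add_three _ _ _).trans (add_le_add (add_le_add ?_ ?_) ?_)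
          · rw [abs_mul, Nat.abs_cast]
            rcases le_or_gt (j+1) (q+1) with h | h
            · have hcc : ((j+1:ℕ):ℝ) ≤ 2*((m+2:ℕ):ℝ)^2*((q:ℝ)+1) := by
                have h' : ((j+1:ℕ):ℝ) ≤ (q:ℝ)+1 := by exact_mod_cast h
                have one_le : (1:ℝ) ≤ 2*((m+2:ℕ):ℝ)^2 := by nlinarith
                have base : 1*((q:ℝ)+1) ≤ (2*((m+2:ℕ):ℝ)^2)*((q:ℝ)+1) :=
                  mul_le_mul_of_nonneg_right one_le hq1
                nlinarith
              exact mul_le_mul_of_nonneg_right hcc (abs_nonneg _)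
            · rw [hva (j+1) (by omega)]
              simp only [abs_zero, mul_zero]
              positivity
          · rw [abs_mul]
            have h2m : (0:ℝ) ≤ 2*((m+2:ℕ):ℝ)-1 := by linarith
            have hc : ((q+1+j:ℕ):ℝ) ≤ 2*((q:ℝ)+1) := by push_cast; linarith
            have hc0 : (0:ℝ) ≤ ((q+1+j:ℕ):ℝ) := Nat.cast_nonneg _
            have hXnn : (0:ℝ) ≤ (2*((m+2:ℕ):ℝ)-1) * ((q+1+j:ℕ):ℝ) := by positivity
            rw [abs_of_nonneg hXnn]
            have hcc : (2*((m+2:ℕ):ℝ)-1) * ((q+1+j:ℕ):ℝ) ≤ 2*((m+2:ℕ):ℝ)^2*((q:ℝ)+1) := by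
              have s1 : (2*((m+2:ℕ):ℝ)-1) * ((q+1+j:ℕ):ℝ)
                  ≤ (2*((m+2:ℕ):ℝ)-1) * (2*((q:ℝ)+1)) :=
                mul_le_mul_of_nonneg_left hc h2m
              have s2 : ((4*((m+2:ℕ):ℝ)-2))*((q:ℝ)+1) ≤ (2*((m+2:ℕ):ℝ)^2)*((q:ℝ)+1) :=
                mul_le_mul_of_nonneg_right (by nlinarith [sq_nonneg (((m+2:ℕ):ℝ)-1)]) hq1
              nlinarith
            exact mul_le_mul_of_nonneg_right hcc (abs_nonneg _)
          · by_cases hj0 : j = 0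
            · simp [hj0]
            · rw [if_neg hj0, if_neg hj0, abs_mul]
              have hm1 : (0:ℝ) ≤ ((m+2:ℕ):ℝ)-1 := by linarith
              have hc : ((q+j:ℕ):ℝ) ≤ 2*((q:ℝ)+1) := by push_cast; linarith
              have hc0 : (0:ℝ) ≤ ((q+j:ℕ):ℝ) := Nat.cast_nonneg _
              have hXnn : (0:ℝ) ≤ ((m+2:ℕ):ℝ) * (((m+2:ℕ):ℝ)-1) * ((q+j:ℕ):ℝ) := by positivity
              rw [abs_of_nonneg hXnn]
              have hcc : ((m+2:ℕ):ℝ) * (((m+2:ℕ):ℝ)-1) * ((q+j:ℕ):ℝ)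
                  ≤ 2*((m+2:ℕ):ℝ)^2*((q:ℝ)+1) := by
                have s1 : ((m+2:ℕ):ℝ) * (((m+2:ℕ):ℝ)-1) * ((q+j:ℕ):ℝ)
                    ≤ ((m+2:ℕ):ℝ) * (((m+2:ℕ):ℝ)-1) * (2*((q:ℝ)+1)) :=
                  mul_le_mul_of_nonneg_left hc (by positivity)
                have s2 : (2*(((m+2:ℕ):ℝ) * (((m+2:ℕ):ℝ)-1)))*((q:ℝ)+1)
                    ≤ (2*((m+2:ℕ):ℝ)^2)*((q:ℝ)+1) :=
                  mul_le_mul_of_nonneg_right (by nlinarith) hq1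
                nlinarith
              exact mul_le_mul_of_nonneg_right hcc (abs_nonneg _)
        have hsplit := Finset.sum_le_sum habs
        rw [Finset.sum_add_distrib, Finset.sum_add_distrib] at hsplit
        have e1 : (∑ j ∈ Finset.range (q+2), 2*((m+2:ℕ):ℝ)^2*((q:ℝ)+1) * |a (j+1)|)
            ≤ 2*((m+2:ℕ):ℝ)^2*((q:ℝ)+1) * ∑ k ∈ Finset.range (q+1), |a k| := by
          rw [← Finset.mul_sum]
          refine mul_le_mul_of_nonneg_left ?_ (by positivity)
          have e := Finset.sum_range_succ' (fun k => |a k|) (q+2)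
          have e2 : (∑ k ∈ Finset.range (q+2+1), |a k|) = ∑ k ∈ Finset.range (q+1), |a k| := by
            rw [Finset.sum_range_succ, Finset.sum_range_succ, hva (q+2) (by omega),
              hva (q+1) (by omega)]
            simp
          rw [e2] at e
          linarith [abs_nonneg (a 0)]
        have e2' : (∑ j ∈ Finset.range (q+2), 2*((m+2:ℕ):ℝ)^2*((q:ℝ)+1) * |a j|)
            = 2*((m+2:ℕ):ℝ)^2*((q:ℝ)+1) * ∑ k ∈ Finset.range (q+1), |a k| := by
          rw [← Finset.mul_sum]
          congr 1
          rw [Finset.sum_range_succ, hva (q+1) (by omega)]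
          simp
        have e3 : (∑ j ∈ Finset.range (q+2),
              (if j = 0 then 0 else 2*((m+2:ℕ):ℝ)^2*((q:ℝ)+1) * |a (j-1)|))
            = 2*((m+2:ℕ):ℝ)^2*((q:ℝ)+1) * ∑ k ∈ Finset.range (q+1), |a k| := by
          rw [Finset.sum_range_succ']
          have hterm : ∀ i : ℕ, (if i+1 = 0 then (0:ℝ)
              else 2*((m+2:ℕ):ℝ)^2*((q:ℝ)+1) * |a (i+1-1)|)
              = 2*((m+2:ℕ):ℝ)^2*((q:ℝ)+1) * |a i| := by
            intro i
            rw [if_neg (Nat.succ_ne_zero i), Nat.add_sub_cancel]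
          simp only [hterm]
          simp [Finset.mul_sum]
        have hmid : (∑ j ∈ Finset.range (q+2), |b j|)
            ≤ 6*((m+2:ℕ):ℝ)^2*((q:ℝ)+1) * ∑ k ∈ Finset.range (q+1), |a k| := by
          linarith
        calc (∑ j ∈ Finset.range (q+2), |b j|)
            ≤ 6*((m+2:ℕ):ℝ)^2*((q:ℝ)+1) * ∑ k ∈ Finset.range (q+1), |a k| := hmid
          _ ≤ 6*((m+2:ℕ):ℝ)^2*((q:ℝ)+1) * ((6 * ((m+2:ℕ):ℝ) ^ 2) ^ q * (Nat.factorial q : ℝ)) :=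
              mul_le_mul_of_nonneg_left hsum (by positivity)
          _ = (6 * ((m+2:ℕ):ℝ) ^ 2) ^ (q+1) * (Nat.factorial (q+1) : ℝ) := by
              rw [Nat.factorial_succ, pow_succ]
              push_cast
              ring
      · -- identity
        intro z hz
        have hzopen : cutPlane (m+2) ∈ nhds z := (isOpen_cutPlane (m+2)).mem_nhds hz
        set D : ℂ := (2*((m+2:ℕ):ℂ)-1) * E z ^ 2
            + ((m+2:ℕ):ℂ)*(((m+2:ℕ):ℂ)-1) * z * E z ^ 3 with hDdef
        have hterm : ∀ k ∈ Finset.range (q+1),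
            HasDerivAt (fun y => (a k : ℂ) * y ^ k * E y ^ (q+1+k))
              ((a k:ℂ) * ((k:ℂ) * z^(k-1)) * E z^(q+1+k)
                + (a k:ℂ) * z^k * (((q+1+k:ℕ):ℂ) * E z^(q+k) * D)) z := by
          intro k _
          have h1 : HasDerivAt (fun y => (a k : ℂ) * y ^ k) ((a k:ℂ) * ((k:ℂ) * z^(k-1))) z :=
            HasDerivAt.const_mul _ (hasDerivAt_pow k z)
          have h2 : HasDerivAt (fun y => E y ^ (q+1+k)) (((q+1+k:ℕ):ℂ) * E z^(q+1+k-1) * D) z :=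
            (hD z hz).pow _
          rw [show q+1+k-1 = q+k from by omega] at h2
          simpa using h1.fun_mul h2
        have hS := HasDerivAt.fun_sum hterm
        have heven : iteratedDeriv q E =ᶠ[nhds z]
            (fun y => ∑ k ∈ Finset.range (q+1), (a k : ℂ) * y ^ k * E y ^ (q+1+k)) :=
          Filter.eventuallyEq_of_mem hzopen (fun y hy => hid y hy)
        rw [iteratedDeriv_succ, heven.deriv_eq, hS.deriv]
        have hzq1 : a (q+1) = 0 := hva _ (by omega)
        have hzq2 : a (q+1+1) = 0 := hva _ (by omega)
        have hA : (∑ k ∈ Finset.range (q+1), (a k:ℂ) * ((k:ℂ) * z^(k-1)) * E z^(q+1+k))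
            = ∑ j ∈ Finset.range (q+2),
                ((((j+1:ℕ):ℝ) * a (j+1) : ℝ) : ℂ) * z^j * E z^(q+2+j) := by
          conv_rhs => rw [Finset.sum_range_succ, Finset.sum_range_succ]
          rw [hzq2, hzq1]
          conv_lhs => rw [Finset.sum_range_succ']
          simp only [Nat.cast_zero, zero_mul, mul_zero, add_zero, Complex.ofReal_zero]
          refine Finset.sum_congr rfl fun i _ => ?_
          simp only [Nat.add_sub_cancel]
          push_cast
          ring
        have hB : (∑ k ∈ Finset.range (q+1),
              ((2*((m+2:ℕ):ℂ)-1) * ((q+1+k:ℕ):ℂ) * (a k:ℂ) * z^k * E z^(q+2+k)))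
            = ∑ j ∈ Finset.range (q+2),
                (((2*((m+2:ℕ):ℝ)-1) * ((q+1+j:ℕ):ℝ) * a j : ℝ) : ℂ) * z^j * E z^(q+2+j) := by
          conv_rhs => rw [Finset.sum_range_succ]
          rw [hzq1]
          simp only [mul_zero, zero_mul, Complex.ofReal_zero, add_zero]
          refine Finset.sum_congr rfl fun i _ => ?_
          push_cast
          ring
        have hC : (∑ k ∈ Finset.range (q+1),
              (((m+2:ℕ):ℂ)*(((m+2:ℕ):ℂ)-1) * ((q+1+k:ℕ):ℂ) * (a k:ℂ) * z^(k+1) * E z^(q+3+k)))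
            = ∑ j ∈ Finset.range (q+2),
                (((if j = 0 then 0
                    else ((m+2:ℕ):ℝ)*(((m+2:ℕ):ℝ)-1) * ((q+j:ℕ):ℝ) * a (j-1)) : ℝ) : ℂ)
                  * z^j * E z^(q+2+j) := by
          conv_rhs => rw [Finset.sum_range_succ']
          rw [if_pos rfl]
          simp only [Complex.ofReal_zero, zero_mul, add_zero]
          refine Finset.sum_congr rfl fun i _ => ?_
          rw [if_neg (show i+1 ≠ 0 by omega)]
          simp only [Nat.add_sub_cancel]
          push_cast
          ring
        calc (∑ k ∈ Finset.range (q+1), ((a k:ℂ) * ((k:ℂ) * z^(k-1)) * E z^(q+1+k)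
                + (a k:ℂ) * z^k * (((q+1+k:ℕ):ℂ) * E z^(q+k) * D)))
            = (∑ k ∈ Finset.range (q+1), (a k:ℂ) * ((k:ℂ) * z^(k-1)) * E z^(q+1+k))
              + ((∑ k ∈ Finset.range (q+1),
                  ((2*((m+2:ℕ):ℂ)-1) * ((q+1+k:ℕ):ℂ) * (a k:ℂ) * z^k * E z^(q+2+k)))
              + (∑ k ∈ Finset.range (q+1),
                  (((m+2:ℕ):ℂ)*(((m+2:ℕ):ℂ)-1) * ((q+1+k:ℕ):ℂ) * (a k:ℂ) * z^(k+1) * E z^(q+3+k)))) := by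
              rw [← Finset.sum_add_distrib, ← Finset.sum_add_distrib]
              refine Finset.sum_congr rfl fun k _ => ?_
              rw [hDdef]
              ring
          _ = ∑ j ∈ Finset.range (q+1+1), (b j : ℂ) * z^j * E z^(q+1+1+j) := by
              rw [hA, hB, hC, ← Finset.sum_add_distrib, ← Finset.sum_add_distrib]
              refine Finset.sum_congr rfl fun j _ => ?_
              simp only [hbdef]
              push_cast [apply_ite (fun x : ℝ => (x : ℂ))]
              ring
  intro q hq
  obtain ⟨a, _, h1, h2⟩ := main q hq
  exact ⟨a, h1, h2⟩
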